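/- Let Λ be a finite-dimensional algebra over a field k. Let M_1 ↪ M_2 ↪ ⋯ ↪ M_d (with injective maps i_1, …, i_{d-1}) and N_1 ↪ N_2 ↪ ⋯ ↪ N_d (with injective maps j_1, …, j_{d-1}) be chains of finite-dimensional Λ-modules. Suppose there exist Λ-modules X_1, …, X_d, homomorphisms h_n : X_n → X_{n+1}, and a commutative diagram whose columns are short exact sequences 0 → X_n → X_n ⊕ M_n → N_n → 0 (for 1 ≤ n ≤ d), where the horizontal maps between the middle rows are h_n ⊕ i_n and between the bottom rows are j_n. Then there exist Λ-modules X'_1, …, X'_d, INJECTIVE homomorphisms h'_n : X'_n → X'_{n+1}, and a commutative diagram of the same shape with exact columns 0 → X'_n → X'_n ⊕ M_n → N_n → 0, horizontal middle maps h'_n ⊕ i_n and bottom maps j_n. -/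

import Mathlib

universe u v

/-- given chains of finite-dimensional `Λ`-modules `M_1 ↪ ⋯ ↪ M_d` (maps `i_n`,
injective) and `N_1 ↪ ⋯ ↪ N_d` (maps `j_n`, injective), together with modules `X_n`, maps
`h_n : X_n → X_{n+1}` and a commutative diagram with exact columns
`0 → X_n → X_n ⊕ M_n → N_n → 0` (horizontal middle maps `h_n ⊕ i_n`, bottom maps `j_n`),
there exist modules `X'_n`, *injective* maps `h'_n : X'_n → X'_{n+1}` and a commutative diagram
of the same shape with exact columns `0 → X'_n → X'_n ⊕ M_n → N_n → 0`. -/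
theorem riedtmann_diagram_monic
    (k : Type u) [Field k]
    (Λ : Type u) [Ring Λ] [Algebra k Λ] [FiniteDimensional k Λ]
    (d : ℕ)
    (M N X : Fin (d + 1) → Type v)
    [∀ n, AddCommGroup (M n)] [∀ n, Module Λ (M n)] [∀ n, Module.Finite Λ (M n)]
    [∀ n, AddCommGroup (N n)] [∀ n, Module Λ (N n)] [∀ n, Module.Finite Λ (N n)]
    [∀ n, AddCommGroup (X n)] [∀ n, Module Λ (X n)] [∀ n, Module.Finite Λ (X n)]
    (i : ∀ n : Fin d, M n.castSucc →ₗ[Λ] M n.succ) (hi : ∀ n, Function.Injective (i n))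
    (j : ∀ n : Fin d, N n.castSucc →ₗ[Λ] N n.succ) (hj : ∀ n, Function.Injective (j n))
    (h : ∀ n : Fin d, X n.castSucc →ₗ[Λ] X n.succ)
    (α : ∀ n : Fin (d + 1), X n →ₗ[Λ] X n × M n)
    (β : ∀ n : Fin (d + 1), X n × M n →ₗ[Λ] N n)
    (hexact : ∀ n : Fin (d + 1), Function.Injective (α n) ∧ Function.Surjective (β n) ∧
      LinearMap.range (α n) = LinearMap.ker (β n))
    (hsquare₁ : ∀ n : Fin d,
      (LinearMap.prodMap (h n) (i n)).comp (α n.castSucc) = (α n.succ).comp (h n))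
    (hsquare₂ : ∀ n : Fin d,
      (β n.succ).comp (LinearMap.prodMap (h n) (i n)) = (j n).comp (β n.castSucc)) :
    ∃ (X' : Fin (d + 1) → Type v)
      (_ : ∀ n, AddCommGroup (X' n)) (_ : ∀ n, Module Λ (X' n)),
      (∀ n, Module.Finite Λ (X' n)) ∧
      ∃ (h' : ∀ n : Fin d, X' n.castSucc →ₗ[Λ] X' n.succ)
        (α' : ∀ n : Fin (d + 1), X' n →ₗ[Λ] X' n × M n)
        (β' : ∀ n : Fin (d + 1), X' n × M n →ₗ[Λ] N n),
        (∀ n : Fin d, Function.Injective (h' n)) ∧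
        (∀ n : Fin (d + 1), Function.Injective (α' n) ∧ Function.Surjective (β' n) ∧
          LinearMap.range (α' n) = LinearMap.ker (β' n)) ∧
        (∀ n : Fin d,
          (LinearMap.prodMap (h' n) (i n)).comp (α' n.castSucc) = (α' n.succ).comp (h' n)) ∧
        (∀ n : Fin d,
          (β' n.succ).comp (LinearMap.prodMap (h' n) (i n)) = (j n).comp (β' n.castSucc)) := by
  classical
  haveI : IsArtinianRing Λ := IsArtinianRing.of_finite k Λ
  -- pointwise versions of the commuting squares
  have hcomm₁ : ∀ (n : Fin d) (x : X n.castSucc),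
      h n ((α n.castSucc x).1) = (α n.succ (h n x)).1 := fun n x =>
    congrArg Prod.fst (LinearMap.congr_fun (hsquare₁ n) x)
  have hcomm₂ : ∀ (n : Fin d) (x : X n.castSucc),
      i n ((α n.castSucc x).2) = (α n.succ (h n x)).2 := fun n x =>
    congrArg Prod.snd (LinearMap.congr_fun (hsquare₁ n) x)
  -- composite maps to the last stage
  let H : ∀ n : Fin (d + 1), X n →ₗ[Λ] X (Fin.last d) :=
    Fin.reverseInduction LinearMap.id (fun n Hs => Hs.comp (h n))
  have hHcast : ∀ n : Fin d, H n.castSucc = (H n.succ).comp (h n) := fun n =>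
    Fin.reverseInduction_castSucc n
  let I : ∀ n : Fin (d + 1), M n →ₗ[Λ] M (Fin.last d) :=
    Fin.reverseInduction LinearMap.id (fun n Is => Is.comp (i n))
  have hIcast : ∀ n : Fin d, I n.castSucc = (I n.succ).comp (i n) := fun n =>
    Fin.reverseInduction_castSucc n
  have hIinj : ∀ n, Function.Injective (I n) := by
    intro n
    induction n using Fin.reverseInduction with
    | last =>
      have : I (Fin.last d) = LinearMap.id := Fin.reverseInduction_last
      rw [this]; exact fun a b hab => hab
    | cast n ih =>
      rw [hIcast n]
      exact ih.comp (hi n)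
  have hHα₁ : ∀ (n : Fin (d + 1)) (x : X n),
      H n ((α n x).1) = (α (Fin.last d) (H n x)).1 := by
    intro n
    induction n using Fin.reverseInduction with
    | last =>
      have : H (Fin.last d) = LinearMap.id := Fin.reverseInduction_last
      intro x; rw [this]; rfl
    | cast n ih =>
      intro x
      rw [hHcast n]
      simp only [LinearMap.comp_apply]
      rw [hcomm₁ n x, ih (h n x)]
  have hHα₂ : ∀ (n : Fin (d + 1)) (x : X n),
      I n ((α n x).2) = (α (Fin.last d) (H n x)).2 := by
    intro n
    induction n using Fin.reverseInduction with
    | last =>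
      have h1 : H (Fin.last d) = LinearMap.id := Fin.reverseInduction_last
      have h2 : I (Fin.last d) = LinearMap.id := Fin.reverseInduction_last
      intro x; rw [h1, h2]; rfl
    | cast n ih =>
      intro x
      rw [hHcast n, hIcast n]
      simp only [LinearMap.comp_apply]
      rw [hcomm₂ n x, ih (h n x)]
  -- the kernels
  let K : ∀ n : Fin (d + 1), Submodule Λ (X n) := fun n => LinearMap.ker (H n)
  have hKα₁ : ∀ (n : Fin (d + 1)), ∀ x ∈ K n, (α n x).1 ∈ K n := by
    intro n x hx
    have : H n x = 0 := hx
    show H n ((α n x).1) = 0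
    rw [hHα₁ n x, this, map_zero]
    rfl
  have hKα₂ : ∀ (n : Fin (d + 1)), ∀ x ∈ K n, (α n x).2 = 0 := by
    intro n x hx
    have hx0 : H n x = 0 := hx
    apply hIinj n
    rw [hHα₂ n x, hx0]
    simp
  -- on `K n` the first component of `α n` is a bijective endomorphism
  have hKsurj : ∀ (n : Fin (d + 1)), ∀ x ∈ K n, ∃ u ∈ K n, α n u = (x, 0) := by
    intro n x hx
    let e : K n →ₗ[Λ] K n :=
      LinearMap.restrict ((LinearMap.fst Λ (X n) (M n)).comp (α n)) (hKα₁ n)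
    have einj : Function.Injective e := by
      intro a b hab
      apply Subtype.ext
      apply (hexact n).1
      have h1 : (α n a.1).1 = (α n b.1).1 := congrArg Subtype.val hab
      have h2 : (α n a.1).2 = 0 := hKα₂ n a.1 a.2
      have h3 : (α n b.1).2 = 0 := hKα₂ n b.1 b.2
      exact Prod.ext h1 (h2.trans h3.symm)
    obtain ⟨u, hu⟩ := IsArtinian.surjective_of_injective_endomorphism e einj ⟨x, hx⟩
    refine ⟨u.1, u.2, ?_⟩
    have h1 : (α n u.1).1 = x := congrArg Subtype.val hu
    have h2 : (α n u.1).2 = 0 := hKα₂ n u.1 u.2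
    exact Prod.ext h1 h2
  have hKβ : ∀ (n : Fin (d + 1)), ∀ x ∈ K n, β n (x, 0) = 0 := by
    intro n x hx
    obtain ⟨u, _, hu⟩ := hKsurj n x hx
    rw [← hu]
    have : α n u ∈ LinearMap.ker (β n) := (hexact n).2.2 ▸ LinearMap.mem_range_self (α n) u
    exact this
  -- the horizontal kernels are compatible
  have hKh : ∀ n : Fin d, K n.castSucc ≤ (K n.succ).comap (h n) := by
    intro n x hx
    have hx0 : H n.castSucc x = 0 := hx
    show H n.succ (h n x) = 0
    rw [← LinearMap.comp_apply, ← hHcast n]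
    exact hx0
  have hKα₁' : ∀ n, K n ≤ (K n).comap ((LinearMap.fst Λ (X n) (M n)).comp (α n)) :=
    fun n x hx => hKα₁ n x hx
  have hKα₂' : ∀ n, K n ≤ LinearMap.ker ((LinearMap.snd Λ (X n) (M n)).comp (α n)) :=
    fun n x hx => hKα₂ n x hx
  have hKβ' : ∀ n, K n ≤ LinearMap.ker ((β n).comp (LinearMap.inl Λ (X n) (M n))) :=
    fun n x hx => hKβ n x hx
  -- construct the new diagram
  refine ⟨fun n => X n ⧸ K n, fun n => inferInstance, fun n => inferInstance,
    fun n => inferInstance, ?_⟩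
  refine ⟨fun n => Submodule.mapQ (K n.castSucc) (K n.succ) (h n) (hKh n),
    fun n => LinearMap.prod
      (Submodule.mapQ (K n) (K n) ((LinearMap.fst Λ (X n) (M n)).comp (α n)) (hKα₁' n))
      (Submodule.liftQ (K n) ((LinearMap.snd Λ (X n) (M n)).comp (α n))
        (hKα₂' n)),
    fun n => LinearMap.coprod
      (Submodule.liftQ (K n) ((β n).comp (LinearMap.inl Λ (X n) (M n)))
        (hKβ' n))
      ((β n).comp (LinearMap.inr Λ (X n) (M n))),
    ?_, ?_, ?_, ?_⟩
  · -- injectivity of h'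
    intro n a b hab
    obtain ⟨x, rfl⟩ := Submodule.Quotient.mk_surjective _ a
    obtain ⟨y, rfl⟩ := Submodule.Quotient.mk_surjective _ b
    rw [Submodule.mapQ_apply, Submodule.mapQ_apply] at hab
    rw [Submodule.Quotient.eq] at hab ⊢
    have : H n.succ (h n x - h n y) = 0 := hab
    show H n.castSucc (x - y) = 0
    rw [hHcast n, LinearMap.comp_apply, map_sub]
    exact this
  · -- exactness of columns
    intro n
    refine ⟨?_, ?_, ?_⟩
    · -- α' injective
      intro a b hab
      obtain ⟨x, rfl⟩ := Submodule.Quotient.mk_surjective _ a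
      obtain ⟨y, rfl⟩ := Submodule.Quotient.mk_surjective _ b
      simp only [LinearMap.prod_apply, Function.prod, Submodule.mapQ_apply,
        Submodule.liftQ_apply, LinearMap.comp_apply, LinearMap.fst_apply,
        LinearMap.snd_apply, Prod.mk.injEq] at hab
      obtain ⟨hab1, hab2⟩ := hab
      rw [Submodule.Quotient.eq] at hab1 ⊢
      have hz1 : (α n (x - y)).1 ∈ K n := by rw [map_sub]; exact hab1
      have hz2 : (α n (x - y)).2 = 0 := by
        rw [map_sub]; exact sub_eq_zero_of_eq hab2
      obtain ⟨u, hu, huα⟩ := hKsurj n _ hz1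
      have : α n u = α n (x - y) := by
        rw [huα]; exact (Prod.ext rfl hz2.symm)
      have hxy : x - y = u := ((hexact n).1 this).symm
      rwa [hxy]
    · -- β' surjective
      intro nn
      obtain ⟨⟨x, m⟩, hxm⟩ := (hexact n).2.1 nn
      refine ⟨(Submodule.Quotient.mk x, m), ?_⟩
      simp only [LinearMap.coprod_apply, Submodule.liftQ_apply, LinearMap.comp_apply,
        LinearMap.inl_apply, LinearMap.inr_apply]
      rw [← map_add, Prod.mk_add_mk, add_zero, zero_add]
      exact hxm
    · -- range α' = ker β'
      apply le_antisymm
      · rintro _ ⟨a, rfl⟩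
        obtain ⟨x, rfl⟩ := Submodule.Quotient.mk_surjective _ a
        simp only [LinearMap.mem_ker, LinearMap.prod_apply, Function.prod,
          Submodule.mapQ_apply, Submodule.liftQ_apply, LinearMap.coprod_apply,
          LinearMap.comp_apply, LinearMap.fst_apply, LinearMap.snd_apply,
          LinearMap.inl_apply, LinearMap.inr_apply]
        rw [← map_add, Prod.mk_add_mk, add_zero, zero_add, Prod.mk.eta]
        have : α n x ∈ LinearMap.ker (β n) :=
          (hexact n).2.2 ▸ LinearMap.mem_range_self (α n) x
        exact this
      · rintro ⟨a, m⟩ hmem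
        obtain ⟨x, rfl⟩ := Submodule.Quotient.mk_surjective _ a
        simp only [LinearMap.mem_ker, LinearMap.coprod_apply, Submodule.liftQ_apply,
          LinearMap.comp_apply, LinearMap.inl_apply, LinearMap.inr_apply] at hmem
        rw [← map_add, Prod.mk_add_mk, add_zero, zero_add] at hmem
        have : (x, m) ∈ LinearMap.range (α n) := (hexact n).2.2 ▸ hmem
        obtain ⟨u, hu⟩ := this
        refine ⟨Submodule.Quotient.mk u, ?_⟩
        simp only [LinearMap.prod_apply, Function.prod, Submodule.mapQ_apply,
          Submodule.liftQ_apply, LinearMap.comp_apply, LinearMap.fst_apply,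
          LinearMap.snd_apply]
        rw [hu]
  · -- first squares
    intro n
    apply LinearMap.ext
    intro a
    obtain ⟨x, rfl⟩ := Submodule.Quotient.mk_surjective _ a
    simp only [LinearMap.comp_apply, LinearMap.prod_apply, Pi.prod,
      Submodule.mapQ_apply, Submodule.liftQ_apply, LinearMap.prodMap_apply,
      Prod.map_apply, LinearMap.fst_apply, LinearMap.snd_apply]
    exact Prod.ext (congrArg (Submodule.Quotient.mk (p := K n.succ)) (hcomm₁ n x))
      (hcomm₂ n x)
  · -- second squares
    intro n
    apply LinearMap.ext
    rintro ⟨a, m⟩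
    obtain ⟨x, rfl⟩ := Submodule.Quotient.mk_surjective _ a
    simp only [LinearMap.comp_apply, LinearMap.prodMap_apply, Prod.map_apply,
      Submodule.mapQ_apply, LinearMap.coprod_apply, Submodule.liftQ_apply,
      LinearMap.inl_apply, LinearMap.inr_apply]
    have e1 : ((h n x, 0) : X n.succ × M n.succ) + (0, i n m) = (h n x, i n m) := by
      simp
    have e2 : ((x, 0) : X n.castSucc × M n.castSucc) + (0, m) = (x, m) := by simp
    rw [← map_add, ← map_add, e1, e2]
    exact LinearMap.congr_fun (hsquare₂ n) (x, m)
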